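/- If a discrete subset S of ℝ³ is the orbit of a point under a non-discrete group of isometries, then S is one of: a single point, a pair of points, a periodic line of points {i·e + c : i ∈ ℤ} for some nonzero vector e, or a union of two interleaved periodic lines {i·e + c : i ∈ ℤ} ∪ {(i+λ)·e + c : i ∈ ℤ} with λ ∉ ℤ. -/

import Mathlib

open Filter

noncomputable section

abbrev E3 := EuclideanSpace ℝ (Fin 3)

section Helpers
lemma accPt_of_seq {α : Type*} [TopologicalSpace α] {S : Set α} {a : ℕ → α} {w : α}
    (hmem : ∀ n, a n ∈ S)
    (hw : Tendsto a atTop (nhds w)) (hne : ∃ᶠ n in atTop, a n ≠ w) : AccPt w (𝓟 S) := by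
  rw [accPt_iff_nhds]
  intro U hU
  obtain ⟨n, hn1, hn2⟩ := ((hw.eventually hU).and_frequently hne).exists
  exact ⟨a n, ⟨hn1, hmem n⟩, hn2⟩

lemma eventually_const_of_tendsto {S : Set E3} (hdisc : ∀ z : E3, ¬ AccPt z (𝓟 S))
    {a : ℕ → E3} {w : E3} (hmem : ∀ n, a n ∈ S) (hw : Tendsto a atTop (nhds w)) :
    ∀ᶠ n in atTop, a n = w := by
  by_contra h
  exact hdisc w (accPt_of_seq hmem hw (not_eventually.mp h))

lemma finite_inter_ball {S : Set E3} (hdisc : ∀ z : E3, ¬ AccPt z (𝓟 S)) (x : E3) (r : ℝ) :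
    (S ∩ Metric.closedBall x r).Finite := by
  by_contra h
  have hinf : (S ∩ Metric.closedBall x r).Infinite := h
  set f := hinf.natEmbedding
  have hb : Bornology.IsBounded (S ∩ Metric.closedBall x r) :=
    (Metric.isBounded_closedBall).subset Set.inter_subset_right
  obtain ⟨w, -, φ, hφ, htend⟩ := tendsto_subseq_of_bounded hb (fun n => (f n).2)
  have hinj : Function.Injective (fun n => (f (φ n) : E3)) :=
    fun m n hmn => hφ.injective (f.injective (Subtype.coe_injective (by simpa using hmn)))
  refine hdisc w (accPt_of_seq (fun n => ((f (φ n)).2).1) htend ?_)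
  rw [frequently_atTop]
  intro N
  rcases eq_or_ne ((f (φ N) : E3)) w with hN | hN
  · exact ⟨N + 1, by omega, fun hc => by
      have := hinj (hc.trans hN.symm); omega⟩
  · exact ⟨N, le_rfl, hN⟩

lemma accPt_metric {α : Type*} [MetricSpace α] {C : Set α} {x : α}
    (h : ∀ ε > 0, ∃ y ∈ C, y ≠ x ∧ dist y x < ε) : AccPt x (𝓟 C) := by
  rw [accPt_iff_nhds]
  intro U hU
  obtain ⟨ε, hε, hball⟩ := Metric.mem_nhds_iff.mp hU
  obtain ⟨y, hyC, hyx, hyd⟩ := h ε hε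
  exact ⟨y, ⟨hball hyd, hyC⟩, hyx⟩

lemma inner_eq_of_dist_eq {p q a b : E3} (h1 : dist p a = dist q a) (h2 : dist p b = dist q b) :
    inner ℝ (q - p) (b - a) = (0:ℝ) := by
  have e1 : ‖p - a‖ ^ 2 = ‖q - a‖ ^ 2 := by rw [← dist_eq_norm, ← dist_eq_norm, h1]
  have e2 : ‖p - b‖ ^ 2 = ‖q - b‖ ^ 2 := by rw [← dist_eq_norm, ← dist_eq_norm, h2]
  simp only [@norm_sub_sq_real E3] at e1 e2
  simp only [inner_sub_left, inner_sub_right]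
  linarith [real_inner_comm p a, real_inner_comm q a, real_inner_comm p b, real_inner_comm q b]

lemma inner_mid_of_dist_eq {p q a : E3} (h1 : dist p a = dist q a) :
    inner ℝ (q - p) ((q - a) + (p - a)) = (0:ℝ) := by
  have e1 : ‖p - a‖ ^ 2 = ‖q - a‖ ^ 2 := by rw [← dist_eq_norm, ← dist_eq_norm, h1]
  simp only [@norm_sub_sq_real E3] at e1
  simp only [inner_sub_left, inner_add_right, inner_sub_right]
  have := real_inner_comm p a; have := real_inner_comm q a; have := real_inner_comm p q
  have hp := real_inner_self_eq_norm_sq p; have hq := real_inner_self_eq_norm_sq q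
  nlinarith [real_inner_comm p a, real_inner_comm q a, real_inner_comm p q]

lemma linIndep_of_not_collinear {a b c : E3} (h : ¬ Collinear ℝ ({a, b, c} : Set E3)) :
    LinearIndependent ℝ ![b - a, c - a] := by
  rw [linearIndependent_fin2]
  simp only [Matrix.cons_val_one, Matrix.head_cons, Matrix.cons_val_zero]
  constructor
  · intro hca
    apply h
    have hc : c = a := by rwa [sub_eq_zero] at hca
    subst hc
    exact (collinear_pair ℝ c b).subset
      (by intro x hx; simp only [Set.mem_insert_iff, Set.mem_singleton_iff] at hx ⊢; tauto)
  · intro μ hμ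
    apply h
    rw [collinear_iff_of_mem (Set.mem_insert a _)]
    refine ⟨c - a, fun p hp => ?_⟩
    simp only [Set.mem_insert_iff, Set.mem_singleton_iff] at hp
    rcases hp with rfl | rfl | rfl
    · exact ⟨0, by simp⟩
    · exact ⟨μ, by rw [vadd_eq_add, hμ]; abel⟩
    · exact ⟨1, by rw [vadd_eq_add, one_smul]; abel⟩

lemma not_three_equidistant {a b c : E3} (habc : ¬ Collinear ℝ ({a, b, c} : Set E3))
    {p q r : E3} (hpq : p ≠ q) (hpr : p ≠ r) (hqr : q ≠ r)
    (daq : dist p a = dist q a) (dbq : dist p b = dist q b) (dcq : dist p c = dist q c)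
    (dar : dist p a = dist r a) (dbr : dist p b = dist r b) (dcr : dist p c = dist r c) :
    False := by
  set u := q - p with hu
  set v := r - p with hv
  have hu0 : u ≠ 0 := sub_ne_zero.mpr (Ne.symm hpq)
  have hv0 : v ≠ 0 := sub_ne_zero.mpr (Ne.symm hpr)
  have hub : inner ℝ u (b - a) = (0:ℝ) := inner_eq_of_dist_eq daq dbq
  have huc : inner ℝ u (c - a) = (0:ℝ) := inner_eq_of_dist_eq daq dcq
  have hvb : inner ℝ v (b - a) = (0:ℝ) := inner_eq_of_dist_eq dar dbr
  have hvc : inner ℝ v (c - a) = (0:ℝ) := inner_eq_of_dist_eq dar dcr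
  have hli : LinearIndependent ℝ ![b - a, c - a] := linIndep_of_not_collinear habc
  set W : Submodule ℝ E3 := Submodule.span ℝ (Set.range ![b - a, c - a]) with hWdef
  have hrange : Set.range ![b - a, c - a] = {b - a, c - a} := by
    simp [Matrix.range_cons, Matrix.range_empty, Set.pair_comm]
  have hW2 : Module.finrank ℝ W = 2 := by
    rw [finrank_span_eq_card hli]; simp
  have hWtot : Module.finrank ℝ W + Module.finrank ℝ Wᗮ = 3 := by
    rw [Submodule.finrank_add_finrank_orthogonal]; exact finrank_euclideanSpace_fin
  have hW1 : Module.finrank ℝ Wᗮ = 1 := by omega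
  have hmem : ∀ x : E3, inner ℝ x (b - a) = (0:ℝ) → inner ℝ x (c - a) = (0:ℝ) → x ∈ Wᗮ := by
    intro x hxb hxc
    rw [Submodule.mem_orthogonal']
    intro w hw
    rw [hWdef, hrange] at hw
    induction hw using Submodule.span_induction with
    | mem w hw =>
      rcases hw with rfl | hw
      · exact hxb
      · rw [Set.mem_singleton_iff] at hw; subst hw; exact hxc
    | zero => exact inner_zero_right x
    | add w₁ w₂ _ _ h1 h2 => rw [inner_add_right, h1, h2, add_zero]
    | smul t w _ h1 => rw [real_inner_smul_right, h1, mul_zero]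
  have humem : u ∈ Wᗮ := hmem u hub huc
  have hvmem : v ∈ Wᗮ := hmem v hvb hvc
  -- v is a multiple of u
  obtain ⟨μ, hμ⟩ : ∃ μ : ℝ, v = μ • u := by
    by_contra hc
    push_neg at hc
    have hli2 : LinearIndependent ℝ ![u, v] := by
      rw [linearIndependent_fin2]
      simp only [Matrix.cons_val_one, Matrix.head_cons, Matrix.cons_val_zero]
      refine ⟨hv0, fun μ hμ => ?_⟩
      have hμ0 : μ ≠ 0 := by rintro rfl; rw [zero_smul] at hμ; exact hu0 hμ.symm
      exact hc μ⁻¹ (by rw [← hμ, smul_smul, inv_mul_cancel₀ hμ0, one_smul])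
    have hle : Submodule.span ℝ (Set.range ![u, v]) ≤ Wᗮ := by
      rw [Submodule.span_le]
      intro x hx
      simp only [Matrix.range_cons, Matrix.range_empty, Set.union_empty,
        Set.union_singleton, Set.mem_insert_iff, Set.mem_singleton_iff] at hx
      rcases hx with rfl | rfl
      · exact hvmem
      · exact humem
    have h2 : Module.finrank ℝ (Submodule.span ℝ (Set.range ![u, v])) = 2 := by
      rw [finrank_span_eq_card hli2]; simp
    have := Submodule.finrank_mono hle
    omega
  have hμ0 : μ ≠ 0 := by rintro rfl; rw [zero_smul] at hμ; exact hv0 hμ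
  have hq : q - a = (p - a) + u := by rw [hu]; abel
  have hr : r - a = (p - a) + μ • u := by rw [← hμ, hv]; abel
  have e1 : inner ℝ u ((q - a) + (p - a)) = (0:ℝ) := inner_mid_of_dist_eq daq
  have e2 : inner ℝ v ((r - a) + (p - a)) = (0:ℝ) := inner_mid_of_dist_eq dar
  rw [hq] at e1
  rw [hr, hμ] at e2
  set s : ℝ := inner ℝ u (p - a) with hs
  set n : ℝ := inner ℝ u u with hn
  have hne : n ≠ 0 := by
    rw [hn]; intro h; exact hu0 (inner_self_eq_zero.mp h)
  simp only [inner_add_right, real_inner_smul_left, real_inner_smul_right] at e1 e2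
  have e1' : s + n + s = 0 := by rw [hs, hn]; linarith [e1]
  have e2' : μ * (s + μ * n + s) = 0 := by rw [hs, hn]; nlinarith [e2]
  have hμ1 : μ = 1 := by
    have h3 : s + μ * n + s = 0 := by
      rcases mul_eq_zero.mp e2' with h | h
      · exact absurd h hμ0
      · exact h
    have : μ * n = n := by linarith
    field_simp at this
    tauto
  apply hqr
  have hvu : v = u := by rw [hμ, hμ1, one_smul]
  rw [hv, hu] at hvu
  exact (sub_left_inj.mp hvu).symm

lemma iso_apply_add (f : E3 ≃ᵢ E3) (u v : E3) :
    f (u + v) = f.toRealLinearIsometryEquiv u + f v := by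
  have h1 := f.toRealLinearIsometryEquiv_apply (u + v)
  have h2 := f.toRealLinearIsometryEquiv_apply u
  have h3 := f.toRealLinearIsometryEquiv_apply v
  have : f.toRealLinearIsometryEquiv (u + v)
      = f.toRealLinearIsometryEquiv u + f.toRealLinearIsometryEquiv v := by
    exact map_add _ u v
  rw [h1, h2, h3] at this
  have := congrArg (· + f 0) this
  simp only [sub_add_cancel] at this
  rw [this, h2]; abel

lemma collinear_image (f : E3 ≃ᵢ E3) {s : Set E3} (h : Collinear ℝ s) :
    Collinear ℝ (f '' s) := by
  rcases s.eq_empty_or_nonempty with rfl | ⟨p₀, hp₀⟩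
  · simp [collinear_empty]
  · rw [collinear_iff_of_mem hp₀] at h
    obtain ⟨v, hv⟩ := h
    rw [collinear_iff_of_mem (Set.mem_image_of_mem f hp₀)]
    refine ⟨f.toRealLinearIsometryEquiv v, ?_⟩
    rintro p ⟨x, hx, rfl⟩
    obtain ⟨r, hr⟩ := hv x hx
    refine ⟨r, ?_⟩
    rw [hr]
    rw [vadd_eq_add, vadd_eq_add, iso_apply_add f (r • v) p₀, map_smul]

lemma iso_line_data (f : E3 ≃ᵢ E3) (x₁ e : E3) (he : e ≠ 0) (a b : ℝ)
    (hfx : f x₁ = a • e + x₁) (hfs : f (e + x₁) = b • e + x₁) :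
    ∃ ε : ℝ, ε ^ 2 = 1 ∧ ∀ t : ℝ, f (t • e + x₁) = (a + ε * t) • e + x₁ := by
  set L := f.toRealLinearIsometryEquiv with hL
  have hLe : L e = (b - a) • e := by
    have h1 : f (e + x₁) = L e + f x₁ := iso_apply_add f e x₁
    rw [hfx, hfs] at h1
    have : L e = b • e + x₁ - (a • e + x₁) := by rw [h1]; abel
    rw [this, sub_smul]; abel
  have hnorm : ‖e‖ = |b - a| * ‖e‖ := by
    have := L.norm_map e
    rw [hLe, norm_smul, Real.norm_eq_abs] at this
    linarith
  have hε : (b - a) ^ 2 = 1 := by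
    have hne : ‖e‖ ≠ 0 := norm_ne_zero_iff.mpr he
    have habs : |b - a| = 1 := by
      have h0 : (|b - a| - 1) * ‖e‖ = 0 := by ring_nf; linarith
      rcases mul_eq_zero.mp h0 with h | h
      · linarith
      · exact absurd h hne
    calc (b-a)^2 = |b-a|^2 := (sq_abs _).symm
    _ = 1 := by rw [habs]; norm_num
  refine ⟨b - a, hε, fun t => ?_⟩
  have h2 : f (t • e + x₁) = L (t • e) + f x₁ := iso_apply_add f (t • e) x₁
  rw [map_smul, hLe, hfx, smul_smul] at h2
  rw [h2, add_smul]
  rw [mul_comm]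
  abel

end Helpers

/-- Proposition 1: a discrete subset `S` of ℝ³ which is the orbit of a point
under a non-discrete group of isometries is a single point, a pair of points, a
periodic line of points `{i·e + c : i ∈ ℤ}`, or the union of two interleaved
periodic lines `{i·e + c} ∪ {(i+λ)·e + c}` with `λ ∉ ℤ`. -/
theorem discrete_orbit_of_nondiscrete_group_classification
    (G : Subgroup (E3 ≃ᵢ E3)) (x₁ : E3)
    (S : Set E3) (hS : S = {y : E3 | ∃ g ∈ G, g x₁ = y})
    (hdisc : ∀ z : E3, ¬ AccPt z (𝓟 S))
    (hnondisc : ∃ (y : E3) (g : ℕ → E3 ≃ᵢ E3) (z : E3),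
      (∀ i, g i ∈ G) ∧ Function.Injective (fun i => g i y) ∧
      Tendsto (fun i => g i y) atTop (nhds z)) :
    (∃ a : E3, S = {a}) ∨
    (∃ a b : E3, a ≠ b ∧ S = {a, b}) ∨
    (∃ e c : E3, e ≠ 0 ∧ S = {p : E3 | ∃ i : ℤ, p = (i : ℝ) • e + c}) ∨
    (∃ (e c : E3) (lam : ℝ), e ≠ 0 ∧ (∀ i : ℤ, lam ≠ (i : ℝ)) ∧
      S = {p : E3 | ∃ i : ℤ, p = (i : ℝ) • e + c} ∪
          {p : E3 | ∃ i : ℤ, p = ((i : ℝ) + lam) • e + c}) := by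
  have hx₁S : x₁ ∈ S := by rw [hS]; exact ⟨1, G.one_mem, rfl⟩
  have hGS : ∀ g ∈ G, ∀ s ∈ S, g s ∈ S := by
    intro g hg s hs
    rw [hS] at hs ⊢
    obtain ⟨h, hh, rfl⟩ := hs
    exact ⟨g * h, G.mul_mem hg hh, rfl⟩
  obtain ⟨y, g, z, hgG, hinj, htend⟩ := hnondisc
  -- Step 2: reduce to the stabilizer of x₁
  obtain ⟨k, hkG, hkx, hky⟩ : ∃ k : ℕ → E3 ≃ᵢ E3, (∀ i, k i ∈ G) ∧ (∀ i, k i x₁ = x₁) ∧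
      Function.Injective (fun i => k i y) := by
    have hbd : Bornology.IsBounded (Set.range fun i => g i x₁) := by
      obtain ⟨C, hC⟩ := Metric.isBounded_iff.mp (Metric.isBounded_range_of_tendsto _ htend)
      rw [Metric.isBounded_iff]
      refine ⟨dist x₁ y + C + dist y x₁, ?_⟩
      rintro _ ⟨i, rfl⟩ _ ⟨j, rfl⟩
      calc dist (g i x₁) (g j x₁)
          ≤ dist (g i x₁) (g i y) + dist (g i y) (g j y) + dist (g j y) (g j x₁) :=
            dist_triangle4 _ _ _ _
        _ = dist x₁ y + dist (g i y) (g j y) + dist y x₁ := by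
            rw [(g i).dist_eq, (g j).dist_eq]
        _ ≤ dist x₁ y + C + dist y x₁ := by
            have := hC (Set.mem_range_self i) (Set.mem_range_self j)
            linarith
    obtain ⟨w, -, φ, hφ, htend2⟩ := tendsto_subseq_of_bounded hbd
      (fun i => Set.mem_range_self (f := fun i => g i x₁) i)
    have hmem : ∀ n, g (φ n) x₁ ∈ S := fun n => by
      rw [hS]; exact ⟨g (φ n), hgG _, rfl⟩
    obtain ⟨N, hN⟩ := eventually_atTop.mp
      (eventually_const_of_tendsto hdisc hmem htend2)
    refine ⟨fun i => (g (φ N))⁻¹ * g (φ (N + i)), fun i => G.mul_mem (G.inv_mem (hgG _)) (hgG _),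
      fun i => ?_, fun i j hij => ?_⟩
    · show (g (φ N))⁻¹ (g (φ (N + i)) x₁) = x₁
      rw [hN (N + i) (by omega), ← hN N le_rfl]
      exact (g (φ N)).symm_apply_apply x₁
    · simp only [IsometryEquiv.mul_apply] at hij
      have h2 : g (φ (N + i)) y = g (φ (N + j)) y := by
        have := congrArg (g (φ N)) hij
        simpa only [IsometryEquiv.apply_symm_apply,
          (show ∀ (e : E3 ≃ᵢ E3) (x : E3), e⁻¹ x = e.symm x from fun _ _ => rfl)] using this
      have := hφ.injective (hinj h2)
      omega
  -- distances from x₁ are preserved by k i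
  have hkdist : ∀ i (p : E3), dist (k i p) x₁ = dist p x₁ := fun i p => by
    conv_lhs => rw [← hkx i]
    exact (k i).dist_eq p x₁
  -- Step 3: all points of S are collinear with x₁
  have hcol : ∀ s ∈ S, ∀ t ∈ S, Collinear ℝ ({x₁, s, t} : Set E3) := by
    by_contra hc
    push_neg at hc
    obtain ⟨s, hsS, t, htS, habc⟩ := hc
    set F : Set E3 := S ∩ Metric.closedBall x₁ (max (dist s x₁) (dist t x₁)) with hF
    have hFfin : F.Finite := finite_inter_ball hdisc _ _
    have hFF : (F ×ˢ F).Finite := hFfin.prod hFfin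
    have hmemF : ∀ i, ((k i s, k i t) : E3 × E3) ∈ F ×ˢ F := by
      intro i
      rw [Set.prodMk_mem_set_prod_eq]
      refine ⟨⟨hGS _ (hkG i) s hsS, ?_⟩, ⟨hGS _ (hkG i) t htS, ?_⟩⟩
      · rw [Metric.mem_closedBall]
        exact le_max_of_le_left (le_of_eq (hkdist i s))
      · rw [Metric.mem_closedBall]
        exact le_max_of_le_right (le_of_eq (hkdist i t))
    haveI : Finite ↥(F ×ˢ F) := hFF.to_subtype
    set Ψ : ℕ → ↥(F ×ˢ F) := fun i => ⟨(k i s, k i t), hmemF i⟩ with hΨ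
    obtain ⟨p, hp⟩ := Finite.exists_infinite_fiber Ψ
    have hIinf : (Ψ ⁻¹' {p}).Infinite := Set.infinite_coe_iff.mp hp
    set f' := hIinf.natEmbedding with hf'
    set i₁ := (f' 0 : ℕ) with hi₁; set i₂ := (f' 1 : ℕ) with hi₂; set i₃ := (f' 2 : ℕ) with hi₃
    have hne12 : i₁ ≠ i₂ := fun h => by
      have := f'.injective (Subtype.coe_injective h); omega
    have hne13 : i₁ ≠ i₃ := fun h => by
      have := f'.injective (Subtype.coe_injective h); omega
    have hne23 : i₂ ≠ i₃ := fun h => by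
      have := f'.injective (Subtype.coe_injective h); omega
    set s' := (p : E3 × E3).1 with hs'
    set t' := (p : E3 × E3).2 with ht'
    have hval : ∀ i ∈ Ψ ⁻¹' {p}, k i s = s' ∧ k i t = t' := by
      intro i hi
      have hip : Ψ i = p := hi
      have h2 := congrArg Subtype.val hip
      rw [hΨ] at h2
      exact ⟨congrArg Prod.fst h2, congrArg Prod.snd h2⟩
    have h1 := hval i₁ (f' 0).2
    have h2 := hval i₂ (f' 1).2
    have h3 := hval i₃ (f' 2).2
    -- x₁, s', t' are not collinear
    have habc' : ¬ Collinear ℝ ({x₁, s', t'} : Set E3) := by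
      intro hcl
      apply habc
      have e1 : (k i₁).symm x₁ = x₁ := by
        conv_lhs => rw [← hkx i₁]
        exact (k i₁).symm_apply_apply x₁
      have e2 : (k i₁).symm s' = s := by rw [← h1.1]; exact (k i₁).symm_apply_apply s
      have e3 : (k i₁).symm t' = t := by rw [← h1.2]; exact (k i₁).symm_apply_apply t
      have himg : ((k i₁).symm) '' {x₁, s', t'} = {x₁, s, t} := by
        rw [Set.image_insert_eq, Set.image_insert_eq, Set.image_singleton, e1, e2, e3]
      rw [← himg]
      exact collinear_image _ hcl
    have hds : ∀ i, k i s = s' → dist (k i y) s' = dist y s := fun i h => by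
      rw [← h]; exact (k i).dist_eq y s
    have hdt : ∀ i, k i t = t' → dist (k i y) t' = dist y t := fun i h => by
      rw [← h]; exact (k i).dist_eq y t
    refine not_three_equidistant habc'
      (p := k i₁ y) (q := k i₂ y) (r := k i₃ y)
      (fun h => hne12 (hky h)) (fun h => hne13 (hky h)) (fun h => hne23 (hky h))
      ?_ ?_ ?_ ?_ ?_ ?_
    · rw [hkdist, hkdist]
    · rw [hds i₁ h1.1, hds i₂ h2.1]
    · rw [hdt i₁ h1.2, hdt i₂ h2.2]
    · rw [hkdist, hkdist]
    · rw [hds i₁ h1.1, hds i₃ h3.1]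
    · rw [hdt i₁ h1.2, hdt i₃ h3.2]
  -- Step 4: single point case, or set up line coordinates
  by_cases hsingle : ∀ s ∈ S, s = x₁
  · exact Or.inl ⟨x₁, Set.eq_singleton_iff_unique_mem.mpr ⟨hx₁S, hsingle⟩⟩
  push_neg at hsingle
  obtain ⟨s₀, hs₀S, hs₀ne⟩ := hsingle
  set e : E3 := s₀ - x₁ with he_def
  have he : e ≠ 0 := sub_ne_zero.mpr hs₀ne
  have hs₀ : s₀ = (1:ℝ) • e + x₁ := by rw [one_smul, he_def]; abel
  have hcoord : ∀ t t' : ℝ, t • e + x₁ = t' • e + x₁ → t = t' := by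
    intro t t' h
    have h2 : (t - t') • e = 0 := by
      rw [sub_smul]
      have := congrArg (fun p => p - x₁) h
      simp only [add_sub_cancel_right] at this
      rw [this]; abel
    rcases smul_eq_zero.mp h2 with h3 | h3
    · linarith [sub_eq_zero.mp (by linarith [h3] : t - t' = 0)]
    · exact absurd h3 he
  have hline : ∀ s ∈ S, ∃ c : ℝ, s = c • e + x₁ := by
    intro s hs
    have hcl := hcol s₀ hs₀S s hs
    rw [collinear_iff_of_mem (Set.mem_insert x₁ _)] at hcl
    obtain ⟨v, hv⟩ := hcl
    obtain ⟨r₁, hr₁⟩ := hv s₀ (by simp)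
    obtain ⟨r₂, hr₂⟩ := hv s (by simp)
    have hr₁0 : r₁ ≠ 0 := by
      rintro rfl
      rw [zero_smul, zero_vadd] at hr₁
      exact hs₀ne hr₁
    have hev : e = r₁ • v := by
      rw [he_def, hr₁, vadd_eq_add]; abel
    refine ⟨r₂ / r₁, ?_⟩
    rw [hr₂, vadd_eq_add, hev, smul_smul, div_mul_cancel₀ _ hr₁0]
  have haction : ∀ g ∈ G, ∃ a ε : ℝ, ε^2 = 1 ∧ g x₁ = a • e + x₁ ∧
      ∀ t : ℝ, g (t • e + x₁) = (a + ε * t) • e + x₁ := by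
    intro g hg
    obtain ⟨a, ha⟩ := hline _ (hGS g hg x₁ hx₁S)
    obtain ⟨b, hb⟩ := hline _ (hGS g hg s₀ hs₀S)
    have hb' : g (e + x₁) = b • e + x₁ := by
      rw [← hb]; congr 1; rw [hs₀, one_smul]
    obtain ⟨ε, hε, hfa⟩ := iso_line_data g x₁ e he a b ha hb'
    exact ⟨a, ε, hε, ha, hfa⟩
  -- translations and reflections along the line
  set TA : ℝ → Prop := fun a => ∃ g ∈ G, ∀ t : ℝ, g (t • e + x₁) = (a + t) • e + x₁ with hTAdef
  set RF : ℝ → Prop := fun a => ∃ g ∈ G, ∀ t : ℝ, g (t • e + x₁) = (a - t) • e + x₁ with hRFdef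
  have hTA0 : TA 0 := ⟨1, G.one_mem, fun t => by rw [zero_add]; rfl⟩
  have hTAadd : ∀ a b, TA a → TA b → TA (a + b) := by
    rintro a b ⟨g, hg, hga⟩ ⟨g', hg', hgb⟩
    refine ⟨g * g', G.mul_mem hg hg', fun t => ?_⟩
    rw [IsometryEquiv.mul_apply, hgb, hga, ← add_assoc]
  have hTAneg : ∀ a, TA a → TA (-a) := by
    rintro a ⟨g, hg, hga⟩
    refine ⟨g⁻¹, G.inv_mem hg, fun t => ?_⟩
    have h2 : g ((t - a) • e + x₁) = t • e + x₁ := by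
      rw [hga (t - a)]; congr 1; ring
    calc g⁻¹ (t • e + x₁) = g⁻¹ (g ((t - a) • e + x₁)) := by rw [h2]
    _ = (t - a) • e + x₁ := g.symm_apply_apply _
    _ = (-a + t) • e + x₁ := by congr 1; ring
  have hRFTA : ∀ r r', RF r → RF r' → TA (r - r') := by
    rintro r r' ⟨g, hg, hgr⟩ ⟨g', hg', hgr'⟩
    refine ⟨g * g', G.mul_mem hg hg', fun t => ?_⟩
    rw [IsometryEquiv.mul_apply, hgr', hgr]; congr 1; ring
  have hRFofTA : ∀ r a, RF r → TA a → RF (r - a) := by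
    rintro r a ⟨g, hg, hgr⟩ ⟨g', hg', hga⟩
    refine ⟨g * g', G.mul_mem hg hg', fun t => ?_⟩
    rw [IsometryEquiv.mul_apply, hga, hgr]; congr 1; ring
  set T : Set ℝ := {t | t • e + x₁ ∈ S} with hTdef
  have hTmem : ∀ t, t ∈ T ↔ TA t ∨ RF t := by
    intro t
    constructor
    · intro ht
      have ht' : t • e + x₁ ∈ S := ht
      rw [hS] at ht'
      obtain ⟨g, hg, hgx⟩ := ht'
      obtain ⟨a, ε, hε, ha, hfa⟩ := haction g hg
      have hta : a = t := hcoord a t (ha.symm.trans hgx)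
      subst hta
      have hε' : ε = 1 ∨ ε = -1 := by
        have h4 : (ε - 1) * (ε + 1) = 0 := by nlinarith [hε]
        rcases mul_eq_zero.mp h4 with h5 | h5
        · left; linarith
        · right; linarith
      rcases hε' with rfl | rfl
      · exact Or.inl ⟨g, hg, fun t' => by rw [hfa t', one_mul]⟩
      · refine Or.inr ⟨g, hg, fun t' => ?_⟩
        rw [hfa t']; congr 1; ring
    · rintro (⟨g, hg, hga⟩ | ⟨g, hg, hgr⟩)
      · show t • e + x₁ ∈ S
        rw [hS]
        refine ⟨g, hg, ?_⟩
        have := hga 0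
        rw [zero_smul, zero_add, add_zero] at this
        exact this
      · show t • e + x₁ ∈ S
        rw [hS]
        refine ⟨g, hg, ?_⟩
        have := hgr 0
        rw [zero_smul, zero_add, sub_zero] at this
        exact this
  have h0T : (0:ℝ) ∈ T := by
    show (0:ℝ) • e + x₁ ∈ S
    rw [zero_smul, zero_add]
    exact hx₁S
  have h1T : (1:ℝ) ∈ T := by
    show (1:ℝ) • e + x₁ ∈ S
    rw [← hs₀]
    exact hs₀S
  have hSrep : S = {p | ∃ t ∈ T, p = t • e + x₁} := by
    ext p
    constructor
    · intro hp
      obtain ⟨c, hc⟩ := hline p hp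
      exact ⟨c, show c • e + x₁ ∈ S from hc ▸ hp, hc⟩
    · rintro ⟨t, ht, rfl⟩
      exact ht
  -- the additive subgroup of translation lengths
  set A : AddSubgroup ℝ :=
    { carrier := {a | TA a}
      zero_mem' := hTA0
      add_mem' := fun ha hb => hTAadd _ _ ha hb
      neg_mem' := fun ha => hTAneg _ ha } with hAdef
  have hAmem : ∀ x : ℝ, x ∈ A ↔ TA x := fun x => Iff.rfl
  have hTdense : ¬ Dense (A : Set ℝ) := by
    intro hd
    apply hdisc x₁
    apply accPt_metric
    intro ε hε
    have hne' : (0:ℝ) < ‖e‖ := norm_pos_iff.mpr he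
    set δ : ℝ := ε / (2 * ‖e‖) with hδdef
    have hδ0 : 0 < δ := by positivity
    obtain ⟨b, hbA, hbd⟩ := Metric.mem_closure_iff.mp (hd δ) (δ/2) (by positivity)
    rw [Real.dist_eq] at hbd
    have hb0 : b ≠ 0 := by
      rintro rfl
      rw [sub_zero, abs_of_pos hδ0] at hbd
      linarith
    have hbabs : |b| < 2 * δ := by
      have h6 := abs_sub_abs_le_abs_sub b δ
      rw [abs_sub_comm] at h6
      rw [abs_of_pos hδ0] at *
      linarith [abs_nonneg (δ - b), le_abs_self δ]
    have hbT : b ∈ T := (hTmem b).mpr (Or.inl hbA)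
    refine ⟨b • e + x₁, hbT, ?_, ?_⟩
    · intro hq
      apply hb0
      have h7 : b • e = 0 := by
        have := congrArg (fun p => p - x₁) hq
        simpa using this
      rcases smul_eq_zero.mp h7 with h8 | h8
      · exact h8
      · exact absurd h8 he
    · rw [dist_eq_norm, add_sub_cancel_right, norm_smul, Real.norm_eq_abs]
      calc |b| * ‖e‖ < 2 * δ * ‖e‖ := by
            exact mul_lt_mul_of_pos_right hbabs hne'
      _ = ε := by rw [hδdef]; field_simp
  by_cases hA0 : ∀ a, TA a → a = 0
  · -- no nontrivial translations : S is a pair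
    have hRsingle : ∀ r r', RF r → RF r' → r = r' := by
      intro r r' hr hr'
      have := hA0 _ (hRFTA r r' hr hr')
      linarith
    refine Or.inr (Or.inl ⟨x₁, e + x₁, ?_, ?_⟩)
    · intro h
      exact he (by
        have := congrArg (fun p => p - x₁) h
        simpa using this.symm)
    · rw [hSrep]
      ext p
      simp only [Set.mem_setOf_eq, Set.mem_insert_iff, Set.mem_singleton_iff]
      constructor
      · rintro ⟨t, ht, rfl⟩
        rcases (hTmem t).mp ht with hta | htr
        · left; rw [hA0 t hta, zero_smul, zero_add]
        · have h1R : RF 1 := by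
            rcases (hTmem 1).mp h1T with h | h
            · exact absurd (hA0 1 h) one_ne_zero
            · exact h
          right; rw [hRsingle t 1 htr h1R, one_smul]
      · rintro (rfl | rfl)
        · exact ⟨0, h0T, by rw [zero_smul, zero_add]⟩
        · exact ⟨1, h1T, by rw [one_smul]⟩
  · push_neg at hA0
    obtain ⟨a₀, ha₀TA, ha₀0⟩ := hA0
    rcases AddSubgroup.dense_or_cyclic A with hd | ⟨α, hα⟩
    · exact absurd hd hTdense
    have hαmem : ∀ x : ℝ, TA x ↔ ∃ i : ℤ, x = (i:ℝ) * α := by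
      intro x
      constructor
      · intro hx
        have hxA : x ∈ A := (hAmem x).mpr hx
        rw [hα] at hxA
        obtain ⟨i, hi⟩ := AddSubgroup.mem_closure_singleton.mp hxA
        exact ⟨i, by rw [← hi, zsmul_eq_mul]⟩
      · rintro ⟨i, rfl⟩
        have hmem : (i:ℝ) * α ∈ AddSubgroup.closure ({α} : Set ℝ) :=
          AddSubgroup.mem_closure_singleton.mpr ⟨i, by rw [zsmul_eq_mul]⟩
        rw [← hα] at hmem
        exact (hAmem _).mp hmem
    have hα0 : α ≠ 0 := by
      rintro rfl
      obtain ⟨i, hi⟩ := (hαmem a₀).mp ha₀TA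
      rw [mul_zero] at hi
      exact ha₀0 hi
    set e' : E3 := α • e with he'def
    have he'0 : e' ≠ 0 := smul_ne_zero hα0 he
    by_cases hRFex : ∃ r, RF r
    · obtain ⟨r₀, hr₀⟩ := hRFex
      have hRall : ∀ r, RF r ↔ ∃ i : ℤ, r = (i:ℝ) * α + r₀ := by
        intro r
        constructor
        · intro hr
          obtain ⟨i, hi⟩ := (hαmem (r - r₀)).mp (hRFTA r r₀ hr hr₀)
          exact ⟨i, by linarith⟩
        · rintro ⟨i, rfl⟩
          have hTAneg' : TA (-((i:ℝ)*α)) := (hαmem _).mpr ⟨-i, by push_cast; ring⟩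
          have h9 := hRFofTA r₀ (-((i:ℝ)*α)) hr₀ hTAneg'
          have h10 : (i:ℝ)*α + r₀ = r₀ - (-((i:ℝ)*α)) := by ring
          rw [h10]
          exact h9
      by_cases hr₀A : ∃ i : ℤ, (i:ℝ) * α = r₀
      · refine Or.inr (Or.inr (Or.inl ⟨e', x₁, he'0, ?_⟩))
        rw [hSrep]
        ext p
        simp only [Set.mem_setOf_eq]
        constructor
        · rintro ⟨t, ht, rfl⟩
          have htA : ∃ i : ℤ, t = (i:ℝ) * α := by
            rcases (hTmem t).mp ht with hta | htr
            · exact (hαmem t).mp hta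
            · obtain ⟨i, hi⟩ := (hRall t).mp htr
              obtain ⟨j, hj⟩ := hr₀A
              exact ⟨i + j, by push_cast; rw [hi, ← hj]; ring⟩
          obtain ⟨i, rfl⟩ := htA
          exact ⟨i, by rw [he'def, smul_smul]⟩
        · rintro ⟨i, rfl⟩
          exact ⟨(i:ℝ) * α, (hTmem _).mpr (Or.inl ((hαmem _).mpr ⟨i, rfl⟩)),
            by rw [he'def, smul_smul]⟩
      · push_neg at hr₀A
        refine Or.inr (Or.inr (Or.inr ⟨e', x₁, r₀ / α, he'0, ?_, ?_⟩))
        · intro i hi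
          apply hr₀A i
          field_simp at hi
          linarith [hi]
        · rw [hSrep]
          ext p
          simp only [Set.mem_setOf_eq, Set.mem_union]
          constructor
          · rintro ⟨t, ht, rfl⟩
            rcases (hTmem t).mp ht with hta | htr
            · obtain ⟨i, rfl⟩ := (hαmem t).mp hta
              exact Or.inl ⟨i, by rw [he'def, smul_smul]⟩
            · obtain ⟨i, rfl⟩ := (hRall t).mp htr
              refine Or.inr ⟨i, ?_⟩
              rw [he'def, smul_smul]
              congr 1
              field_simp
          · rintro (⟨i, rfl⟩ | ⟨i, rfl⟩)
            · exact ⟨(i:ℝ) * α, (hTmem _).mpr (Or.inl ((hαmem _).mpr ⟨i, rfl⟩)),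
                by rw [he'def, smul_smul]⟩
            · refine ⟨(i:ℝ) * α + r₀, (hTmem _).mpr (Or.inr ((hRall _).mpr ⟨i, rfl⟩)), ?_⟩
              rw [he'def, smul_smul]
              congr 1
              field_simp
    · refine Or.inr (Or.inr (Or.inl ⟨e', x₁, he'0, ?_⟩))
      rw [hSrep]
      ext p
      simp only [Set.mem_setOf_eq]
      constructor
      · rintro ⟨t, ht, rfl⟩
        rcases (hTmem t).mp ht with hta | htr
        · obtain ⟨i, rfl⟩ := (hαmem t).mp hta
          exact ⟨i, by rw [he'def, smul_smul]⟩
        · exact absurd ⟨t, htr⟩ hRFex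
      · rintro ⟨i, rfl⟩
        exact ⟨(i:ℝ) * α, (hTmem _).mpr (Or.inl ((hαmem _).mpr ⟨i, rfl⟩)),
          by rw [he'def, smul_smul]⟩
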